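/- (Convolution bound for separated surface measure caps.) Let K ≥ 1, c₀ > 0, R ≥ 1. Let ω₁, ω₂ ⊂ D(1) be squares of side at most 3R^{-1/2} such that for every (v₁,w₁) ∈ ω₁ and (v₂,w₂) ∈ ω₂ one has |v₁ − v₂| ≥ c₀K⁻¹ and |w₁ − w₂| ≥ c₀K⁻¹. Let σ₁ and σ₂ be the restrictions of the surface measure dσ of S to the pieces of S above ω₁ and ω₂, respectively. Then the convolution σ₁ ∗ σ₂ (a measure on ℝ³) is absolutely continuous with respect to Lebesgue measure, with density bounded almost everywhere by C R^{-1/2}, where C = C(K, c₀) is independent of R. -/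

import Mathlib

open MeasureTheory Real
open scoped ENNReal RealInnerProductSpace

noncomputable section

/-- Euclidean `ℝ³`. -/
abbrev E3 := EuclideanSpace ℝ (Fin 3)

/-- The closed unit disk `D(1)` in `ℝ²`, the parameter domain of the compact piece
`S = {(ξ₁,ξ₂,ξ₁ξ₂) : (ξ₁,ξ₂) ∈ D(1)}` of the hyperbolic paraboloid. -/
def D1 : Set (ℝ × ℝ) := Metric.closedBall 0 1

/-- Surface-measure density (Jacobian) of the graph map `(ξ₁,ξ₂) ↦ (ξ₁,ξ₂,ξ₁ξ₂)`. -/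
def surfJ (ξ : ℝ × ℝ) : ℝ := Real.sqrt (1 + ξ.1 ^ 2 + ξ.2 ^ 2)

/-- The surface measure `dσ` of `S`, realized on the parameter disk `D(1)`
(`L^p(S,dσ)` norms of functions on `S` are `L^p(σS)` norms in graph coordinates). -/
def σS : Measure (ℝ × ℝ) :=
  (volume.restrict D1).withDensity fun ξ => ENNReal.ofReal (surfJ ξ)

/-- The extension (adjoint restriction) operator `Ef(x) = ∫_S e^{ix·ξ} f(ξ) dσ(ξ)`
of the hyperbolic paraboloid piece `S`, in graph coordinates. -/
def extOp (f : ℝ × ℝ → ℂ) (x : E3) : ℂ :=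
  ∫ ξ, Complex.exp (Complex.I * ((x 0 * ξ.1 + x 1 * ξ.2 + x 2 * (ξ.1 * ξ.2) : ℝ) : ℂ)) * f ξ ∂σS

/-- The graph parametrization `(ξ₁,ξ₂) ↦ (ξ₁,ξ₂,ξ₁ξ₂)` of `S`, into `ℝ³`. -/
def graphMap (ξ : ℝ × ℝ) : E3 :=
  (WithLp.equiv 2 (Fin 3 → ℝ)).symm ![ξ.1, ξ.2, ξ.1 * ξ.2]

/-- The restriction of the surface measure `dσ` of `S` to the piece of `S` above
`ω ⊆ D(1)`, as a measure on `ℝ³`. -/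
def surfMeasAbove (ω : Set (ℝ × ℝ)) : Measure E3 :=
  Measure.map graphMap (σS.restrict ω)

/-- Convolution of two (finite Borel) measures on `ℝ³`. -/
def mconv (μ ν : Measure E3) : Measure E3 :=
  Measure.map (fun p : E3 × E3 => p.1 + p.2) (μ.prod ν)


/-! ### Auxiliary machinery for the proof -/

/-- `(u,v,w)` as a point of `ℝ³`. -/
def mk3 (u v w : ℝ) : E3 := (WithLp.equiv 2 (Fin 3 → ℝ)).symm ![u, v, w]

@[fun_prop]
lemma measurable_mk3 {α : Type*} [MeasurableSpace α] {f g h : α → ℝ}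
    (hf : Measurable f) (hg : Measurable g) (hh : Measurable h) :
    Measurable (fun a => mk3 (f a) (g a) (h a)) := by
  unfold mk3
  refine (WithLp.measurable_toLp 2 (Fin 3 → ℝ)).comp (f := fun a => ![f a, g a, h a]) ?_
  rw [measurable_pi_iff]
  intro i
  fin_cases i <;> simpa

lemma surfJ_nonneg (ξ : ℝ × ℝ) : 0 ≤ surfJ ξ := Real.sqrt_nonneg _

lemma measurable_surfJ : Measurable surfJ := by
  unfold surfJ; fun_prop

/-- full integrand of the convolution in graph coordinates -/
def Phi (I₁ J₁ I₂ J₂ : Set ℝ) (A : Set E3) (ξ₁ ξ₂ η₁ η₂ : ℝ) : ℝ≥0∞ :=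
  I₁.indicator 1 ξ₁ * J₁.indicator 1 ξ₂ * I₂.indicator 1 η₁ * J₂.indicator 1 η₂ *
  ENNReal.ofReal (surfJ (ξ₁, ξ₂)) * ENNReal.ofReal (surfJ (η₁, η₂)) *
  A.indicator 1 (mk3 (ξ₁ + η₁) (ξ₂ + η₂) (ξ₁ * ξ₂ + η₁ * η₂))

/-- `ξ₂` reconstructed from `(v,w)` at parameters `(ξ₁,η₁)`. -/
def qm (ξ₁ η₁ v w : ℝ) : ℝ := (w - η₁ * v) / (ξ₁ - η₁)

/-- integrand after the `(ξ₂,η₂) ↦ (v,w)` change of variables -/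
def PhiM (I₁ J₁ I₂ J₂ : Set ℝ) (A : Set E3) (ξ₁ η₁ v w : ℝ) : ℝ≥0∞ :=
  I₁.indicator 1 ξ₁ * J₁.indicator 1 (qm ξ₁ η₁ v w) * I₂.indicator 1 η₁ *
  J₂.indicator 1 (v - qm ξ₁ η₁ v w) *
  ENNReal.ofReal (surfJ (ξ₁, qm ξ₁ η₁ v w)) *
  ENNReal.ofReal (surfJ (η₁, v - qm ξ₁ η₁ v w)) *
  ENNReal.ofReal |ξ₁ - η₁|⁻¹ *
  A.indicator 1 (mk3 (ξ₁ + η₁) v w)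

/-- the fiber integrand of the density of the convolution -/
def Hd (I₁ J₁ I₂ J₂ : Set ℝ) (t u v w : ℝ) : ℝ≥0∞ :=
  I₁.indicator 1 t * J₁.indicator 1 (qm t (u - t) v w) * I₂.indicator 1 (u - t) *
  J₂.indicator 1 (v - qm t (u - t) v w) *
  ENNReal.ofReal (surfJ (t, qm t (u - t) v w)) *
  ENNReal.ofReal (surfJ (u - t, v - qm t (u - t) v w)) *
  ENNReal.ofReal |t - (u - t)|⁻¹

section Measurability

variable {I₁ J₁ I₂ J₂ : Set ℝ} {A : Set E3} {α : Type*} [MeasurableSpace α]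

lemma measurable_Phi_comp
    (hI₁ : MeasurableSet I₁) (hJ₁ : MeasurableSet J₁) (hI₂ : MeasurableSet I₂)
    (hJ₂ : MeasurableSet J₂) (hA : MeasurableSet A)
    {f1 f2 f3 f4 : α → ℝ} (h1 : Measurable f1) (h2 : Measurable f2)
    (h3 : Measurable f3) (h4 : Measurable f4) :
    Measurable (fun a => Phi I₁ J₁ I₂ J₂ A (f1 a) (f2 a) (f3 a) (f4 a)) := by
  unfold Phi
  exact ((((((((measurable_one.indicator hI₁).comp h1).mul
    ((measurable_one.indicator hJ₁).comp h2)).mul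
    ((measurable_one.indicator hI₂).comp h3)).mul
    ((measurable_one.indicator hJ₂).comp h4)).mul
    (ENNReal.measurable_ofReal.comp (measurable_surfJ.comp (h1.prodMk h2)))).mul
    (ENNReal.measurable_ofReal.comp (measurable_surfJ.comp (h3.prodMk h4)))).mul
    ((measurable_one.indicator hA).comp
      (measurable_mk3 (h1.add h3) (h2.add h4) ((h1.mul h2).add (h3.mul h4)))))

lemma measurable_PhiM_comp
    (hI₁ : MeasurableSet I₁) (hJ₁ : MeasurableSet J₁) (hI₂ : MeasurableSet I₂)
    (hJ₂ : MeasurableSet J₂) (hA : MeasurableSet A)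
    {f1 f2 f3 f4 : α → ℝ} (h1 : Measurable f1) (h2 : Measurable f2)
    (h3 : Measurable f3) (h4 : Measurable f4) :
    Measurable (fun a => PhiM I₁ J₁ I₂ J₂ A (f1 a) (f2 a) (f3 a) (f4 a)) := by
  unfold PhiM
  have hq : Measurable fun a => qm (f1 a) (f2 a) (f3 a) (f4 a) := by
    unfold qm; fun_prop
  exact ((((((((measurable_one.indicator hI₁).comp h1).mul
    ((measurable_one.indicator hJ₁).comp hq)).mul
    ((measurable_one.indicator hI₂).comp h2)).mul
    ((measurable_one.indicator hJ₂).comp (h3.sub hq))).mul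
    (ENNReal.measurable_ofReal.comp (measurable_surfJ.comp (h1.prodMk hq)))).mul
    (ENNReal.measurable_ofReal.comp (measurable_surfJ.comp (h2.prodMk (h3.sub hq))))).mul
    (ENNReal.measurable_ofReal.comp (by fun_prop : Measurable fun a => |f1 a - f2 a|⁻¹))).mul
    ((measurable_one.indicator hA).comp (measurable_mk3 (h1.add h2) h3 h4))

lemma measurable_Hd_comp
    (hI₁ : MeasurableSet I₁) (hJ₁ : MeasurableSet J₁) (hI₂ : MeasurableSet I₂)
    (hJ₂ : MeasurableSet J₂)
    {f1 f2 f3 f4 : α → ℝ} (h1 : Measurable f1) (h2 : Measurable f2)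
    (h3 : Measurable f3) (h4 : Measurable f4) :
    Measurable (fun a => Hd I₁ J₁ I₂ J₂ (f1 a) (f2 a) (f3 a) (f4 a)) := by
  unfold Hd
  have hq : Measurable fun a => qm (f1 a) (f2 a - f1 a) (f3 a) (f4 a) := by
    unfold qm; fun_prop
  exact (((((((measurable_one.indicator hI₁).comp h1).mul
    ((measurable_one.indicator hJ₁).comp hq)).mul
    ((measurable_one.indicator hI₂).comp (h2.sub h1))).mul
    ((measurable_one.indicator hJ₂).comp (h3.sub hq))).mul
    (ENNReal.measurable_ofReal.comp (measurable_surfJ.comp (h1.prodMk hq)))).mul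
    (ENNReal.measurable_ofReal.comp
      (measurable_surfJ.comp ((h2.sub h1).prodMk (h3.sub hq))))).mul
    (ENNReal.measurable_ofReal.comp
      (by fun_prop : Measurable fun a => |f1 a - (f2 a - f1 a)|⁻¹))

end Measurability

lemma lintegral_comp_affine {a : ℝ} (ha : a ≠ 0) (b : ℝ) {f : ℝ → ℝ≥0∞}
    (hf : Measurable f) :
    ∫⁻ x, f (a * x + b) = ENNReal.ofReal |a|⁻¹ * ∫⁻ x, f x := by
  calc ∫⁻ x, f (a * x + b) = ∫⁻ x, (fun y => f (y + b)) (a * x) := rfl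
  _ = ∫⁻ y, f (y + b) ∂(Measure.map (a * ·) volume) :=
      (lintegral_map (hf.comp (measurable_add_const b)) (measurable_const_mul a)).symm
  _ = ENNReal.ofReal |a⁻¹| * ∫⁻ y, f (y + b) := by
      rw [Real.map_volume_mul_left ha, lintegral_smul_measure, smul_eq_mul]
  _ = ENNReal.ofReal |a|⁻¹ * ∫⁻ x, f x := by
      rw [lintegral_add_right_eq_self, abs_inv]

lemma indicator_one_mul {α : Type*} (s : Set α) (f : α → ℝ≥0∞) (x : α) :
    s.indicator f x = s.indicator 1 x * f x := by
  by_cases h : x ∈ s <;> simp [Set.indicator_apply, h]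

lemma indicator_prod_one (s t : Set ℝ) (p : ℝ × ℝ) :
    (s ×ˢ t).indicator (1 : ℝ × ℝ → ℝ≥0∞) p = s.indicator 1 p.1 * t.indicator 1 p.2 := by
  by_cases h1 : p.1 ∈ s <;> by_cases h2 : p.2 ∈ t <;>
    simp [Set.indicator_apply, Set.mem_prod, h1, h2]

lemma graphMap_meas : Measurable graphMap :=
  measurable_mk3 measurable_fst measurable_snd (measurable_fst.mul measurable_snd)

lemma sfinite_σS : SFinite σS := by unfold σS; infer_instance

lemma restrict_σS {ω : Set (ℝ × ℝ)} (hω : MeasurableSet ω) (hsub : ω ⊆ D1) :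
    σS.restrict ω = volume.withDensity (ω.indicator fun ξ => ENNReal.ofReal (surfJ ξ)) := by
  unfold σS
  rw [restrict_withDensity hω, Measure.restrict_restrict hω,
    Set.inter_eq_left.mpr hsub, withDensity_indicator hω]

lemma lintegral_mk3 (f : E3 → ℝ≥0∞) (hf : Measurable f) :
    ∫⁻ x, f x = ∫⁻ u, ∫⁻ v, ∫⁻ w, f (mk3 u v w) := by
  have e0 := (EuclideanSpace.volume_preserving_symm_measurableEquiv_toLp (Fin 3)).symm
  have e1 := (volume_preserving_piFinSuccAbove (fun _ : Fin 3 => ℝ) 0).symm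
  have e2 := ((MeasurePreserving.id (volume : Measure ℝ)).prod
    (volume_preserving_finTwoArrow ℝ).symm)
  have key : MeasurePreserving
      (fun p : ℝ × ℝ × ℝ => mk3 p.1 p.2.1 p.2.2) volume volume := by
    have comp := (e0.comp e1).comp e2
    convert comp using 1
    · rfl
    · rfl
    swap
    · rfl
    funext p
    show mk3 p.1 p.2.1 p.2.2 = _
    ext i
    fin_cases i <;>
      simp [mk3, MeasurableEquiv.piFinSuccAbove, Fin.insertNthEquiv,
        MeasurableEquiv.finTwoArrow, Fin.insertNth, MeasurableEquiv.coe_toLp] <;> rfl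
  rw [← key.lintegral_comp hf]
  rw [Measure.volume_eq_prod, lintegral_prod]
  · congr 1; funext u
    rw [Measure.volume_eq_prod, lintegral_prod]
    exact (hf.comp (measurable_mk3 measurable_const measurable_fst
      measurable_snd)).aemeasurable
  · exact (hf.comp (measurable_mk3 measurable_fst
      (measurable_fst.comp measurable_snd)
      (measurable_snd.comp measurable_snd))).aemeasurable

section Steps

variable {I₁ J₁ I₂ J₂ : Set ℝ} {A : Set E3}

lemma step1 (hI₁ : MeasurableSet I₁) (hJ₁ : MeasurableSet J₁) (hI₂ : MeasurableSet I₂)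
    (hJ₂ : MeasurableSet J₂) (hsub₁ : I₁ ×ˢ J₁ ⊆ D1) (hsub₂ : I₂ ×ˢ J₂ ⊆ D1)
    (hA : MeasurableSet A) :
    mconv (surfMeasAbove (I₁ ×ˢ J₁)) (surfMeasAbove (I₂ ×ˢ J₂)) A
      = ∫⁻ ξ₁, ∫⁻ η₁, ∫⁻ ξ₂, ∫⁻ η₂, Phi I₁ J₁ I₂ J₂ A ξ₁ ξ₂ η₁ η₂ := by
  haveI : SFinite σS := sfinite_σS
  have hω₁ : MeasurableSet (I₁ ×ˢ J₁) := hI₁.prod hJ₁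
  have hω₂ : MeasurableSet (I₂ ×ˢ J₂) := hI₂.prod hJ₂
  set ρ₁ := σS.restrict (I₁ ×ˢ J₁) with hρ₁
  set ρ₂ := σS.restrict (I₂ ×ˢ J₂) with hρ₂
  set d₁ : ℝ × ℝ → ℝ≥0∞ := (I₁ ×ˢ J₁).indicator fun ξ => ENNReal.ofReal (surfJ ξ) with hd₁def
  set d₂ : ℝ × ℝ → ℝ≥0∞ := (I₂ ×ˢ J₂).indicator fun ξ => ENNReal.ofReal (surfJ ξ) with hd₂def
  have hd₁ : Measurable d₁ :=
    (ENNReal.measurable_ofReal.comp measurable_surfJ).indicator hω₁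
  have hd₂ : Measurable d₂ :=
    (ENNReal.measurable_ofReal.comp measurable_surfJ).indicator hω₂
  have hd₁top : ∀ ξ, d₁ ξ ≠ ∞ := by
    intro ξ; by_cases h : ξ ∈ I₁ ×ˢ J₁ <;> simp [hd₁def, Set.indicator_apply, h]
  have hρ₁eq : ρ₁ = volume.withDensity d₁ := restrict_σS hω₁ hsub₁
  have hρ₂eq : ρ₂ = volume.withDensity d₂ := restrict_σS hω₂ hsub₂
  set F : (ℝ × ℝ) × (ℝ × ℝ) → E3 := fun z =>
    mk3 (z.1.1 + z.2.1) (z.1.2 + z.2.2) (z.1.1 * z.1.2 + z.2.1 * z.2.2) with hFdef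
  have hF : Measurable F := measurable_mk3 (by fun_prop) (by fun_prop) (by fun_prop)
  set G : (ℝ × ℝ) × (ℝ × ℝ) → ℝ≥0∞ := fun z => A.indicator 1 (F z) with hGdef
  have hG : Measurable G := (measurable_one.indicator hA).comp hF
  have haddm : Measurable fun p : E3 × E3 => p.1 + p.2 := measurable_fst.add measurable_snd
  have hpm : Measurable (Prod.map graphMap graphMap) := graphMap_meas.prodMap graphMap_meas
  have hset : ((fun p : E3 × E3 => p.1 + p.2) ∘ Prod.map graphMap graphMap) = F := by
    funext z
    show graphMap z.1 + graphMap z.2 = F z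
    ext i
    fin_cases i <;> rfl
  have key : mconv (surfMeasAbove (I₁ ×ˢ J₁)) (surfMeasAbove (I₂ ×ˢ J₂)) A
      = (ρ₁.prod ρ₂) (F ⁻¹' A) := by
    unfold mconv surfMeasAbove
    rw [Measure.map_prod_map _ _ graphMap_meas graphMap_meas,
      Measure.map_map haddm hpm, Measure.map_apply (haddm.comp hpm) hA, hset]
  rw [key]
  have step_a : (ρ₁.prod ρ₂) (F ⁻¹' A) = ∫⁻ ξ, ∫⁻ η, G (ξ, η) ∂ρ₂ ∂ρ₁ :=
    calc (ρ₁.prod ρ₂) (F ⁻¹' A)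
        = ∫⁻ z, (F ⁻¹' A).indicator 1 z ∂(ρ₁.prod ρ₂) :=
          (lintegral_indicator_one (hF hA)).symm
      _ = ∫⁻ z, G z ∂(ρ₁.prod ρ₂) := lintegral_congr fun z => by
          by_cases h : F z ∈ A <;>
            simp [hGdef, Set.indicator_apply, Set.mem_preimage, h]
      _ = ∫⁻ ξ, ∫⁻ η, G (ξ, η) ∂ρ₂ ∂ρ₁ := lintegral_prod _ hG.aemeasurable
  rw [step_a]
  have inner_eq : ∀ ξ, ∫⁻ η, G (ξ, η) ∂ρ₂ = ∫⁻ η, d₂ η * G (ξ, η) := by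
    intro ξ
    rw [hρ₂eq, lintegral_withDensity_eq_lintegral_mul volume hd₂
      (show Measurable fun η => G (ξ, η) from hG.comp measurable_prodMk_left)]
    rfl
  rw [lintegral_congr inner_eq, hρ₁eq, lintegral_withDensity_eq_lintegral_mul volume hd₁
    (show Measurable fun ξ => ∫⁻ η, d₂ η * G (ξ, η) from
      ((hd₂.comp measurable_snd).mul hG).lintegral_prod_right')]
  have push : ∀ ξ, (d₁ * fun ξ => ∫⁻ η, d₂ η * G (ξ, η)) ξ
      = ∫⁻ η, d₁ ξ * (d₂ η * G (ξ, η)) := by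
    intro ξ
    exact (lintegral_const_mul' _ _ (hd₁top ξ)).symm
  rw [lintegral_congr push]
  have hWm : Measurable fun z : (ℝ × ℝ) × (ℝ × ℝ) => d₁ z.1 * (d₂ z.2 * G z) :=
    (hd₁.comp measurable_fst).mul ((hd₂.comp measurable_snd).mul hG)
  have split2 : ∀ f : ℝ × ℝ → ℝ≥0∞, Measurable f →
      ∫⁻ p : ℝ × ℝ, f p = ∫⁻ x, ∫⁻ y, f (x, y) := by
    intro f hf
    rw [Measure.volume_eq_prod, lintegral_prod _ hf.aemeasurable]
  rw [split2 _ hWm.lintegral_prod_right']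
  have phi_eq : ∀ ξ₁ ξ₂ η₁ η₂, d₁ (ξ₁, ξ₂) * (d₂ (η₁, η₂) * G ((ξ₁, ξ₂), (η₁, η₂)))
      = Phi I₁ J₁ I₂ J₂ A ξ₁ ξ₂ η₁ η₂ := by
    intro ξ₁ ξ₂ η₁ η₂
    rw [hd₁def, hd₂def,
      indicator_one_mul (I₁ ×ˢ J₁) (fun ξ => ENNReal.ofReal (surfJ ξ)),
      indicator_one_mul (I₂ ×ˢ J₂) (fun ξ => ENNReal.ofReal (surfJ ξ)),
      indicator_prod_one, indicator_prod_one]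
    show _ = Phi I₁ J₁ I₂ J₂ A ξ₁ ξ₂ η₁ η₂
    unfold Phi
    simp only [hGdef, hFdef]
    ring
  have mid_eq : ∀ ξ₁, (∫⁻ ξ₂, ∫⁻ η : ℝ × ℝ, d₁ (ξ₁, ξ₂) * (d₂ η * G ((ξ₁, ξ₂), η)))
      = ∫⁻ η₁, ∫⁻ ξ₂, ∫⁻ η₂, Phi I₁ J₁ I₂ J₂ A ξ₁ ξ₂ η₁ η₂ := by
    intro ξ₁
    have e1 : ∀ ξ₂, (∫⁻ η : ℝ × ℝ, d₁ (ξ₁, ξ₂) * (d₂ η * G ((ξ₁, ξ₂), η)))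
        = ∫⁻ η₁, ∫⁻ η₂, Phi I₁ J₁ I₂ J₂ A ξ₁ ξ₂ η₁ η₂ := by
      intro ξ₂
      rw [split2 _ (show Measurable fun η : ℝ × ℝ =>
        d₁ (ξ₁, ξ₂) * (d₂ η * G ((ξ₁, ξ₂), η)) from
          hWm.comp (measurable_const.prodMk measurable_id))]
      exact lintegral_congr fun η₁ => lintegral_congr fun η₂ => phi_eq ξ₁ ξ₂ η₁ η₂
    rw [lintegral_congr e1]
    exact lintegral_lintegral_swap
      ((measurable_Phi_comp hI₁ hJ₁ hI₂ hJ₂ hA measurable_const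
        (measurable_fst.comp measurable_fst) (measurable_snd.comp measurable_fst)
        measurable_snd).lintegral_prod_right'.aemeasurable)
  exact lintegral_congr mid_eq

lemma step2 (hI₁ : MeasurableSet I₁) (hJ₁ : MeasurableSet J₁) (hI₂ : MeasurableSet I₂)
    (hJ₂ : MeasurableSet J₂) (hA : MeasurableSet A)
    (hsep : ∀ t ∈ I₁, ∀ s ∈ I₂, t ≠ s) :
    ∫⁻ ξ₁, ∫⁻ η₁, ∫⁻ ξ₂, ∫⁻ η₂, Phi I₁ J₁ I₂ J₂ A ξ₁ ξ₂ η₁ η₂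
      = ∫⁻ t, ∫⁻ u, ∫⁻ v, ∫⁻ w, PhiM I₁ J₁ I₂ J₂ A t (u - t) v w := by
  have eqB3 : ∀ ξ₁ η₁ v, ∫⁻ ξ₂, Phi I₁ J₁ I₂ J₂ A ξ₁ ξ₂ η₁ (v - ξ₂)
      = ∫⁻ w, PhiM I₁ J₁ I₂ J₂ A ξ₁ η₁ v w := by
    intro ξ₁ η₁ v
    by_cases h : ξ₁ ∈ I₁ ∧ η₁ ∈ I₂
    · have hd : ξ₁ - η₁ ≠ 0 := sub_ne_zero.mpr (hsep _ h.1 _ h.2)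
      set Psi : ℝ → ℝ≥0∞ := fun w =>
        Phi I₁ J₁ I₂ J₂ A ξ₁ (qm ξ₁ η₁ v w) η₁ (v - qm ξ₁ η₁ v w) with hPsidef
      have hPsim : Measurable Psi := by
        have hq : Measurable fun w => qm ξ₁ η₁ v w := by unfold qm; fun_prop
        exact measurable_Phi_comp hI₁ hJ₁ hI₂ hJ₂ hA measurable_const hq
          measurable_const ((measurable_const : Measurable fun _ : ℝ => v).sub hq)
      have key : ∀ ξ₂, Phi I₁ J₁ I₂ J₂ A ξ₁ ξ₂ η₁ (v - ξ₂)
          = Psi ((ξ₁ - η₁) * ξ₂ + η₁ * v) := by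
        intro ξ₂
        have hq : qm ξ₁ η₁ v ((ξ₁ - η₁) * ξ₂ + η₁ * v) = ξ₂ := by
          unfold qm; field_simp; ring
        rw [hPsidef]; simp only [hq]
      calc ∫⁻ ξ₂, Phi I₁ J₁ I₂ J₂ A ξ₁ ξ₂ η₁ (v - ξ₂)
          = ∫⁻ ξ₂, Psi ((ξ₁ - η₁) * ξ₂ + η₁ * v) := lintegral_congr key
        _ = ENNReal.ofReal |ξ₁ - η₁|⁻¹ * ∫⁻ w, Psi w := lintegral_comp_affine hd _ hPsim
        _ = ∫⁻ w, ENNReal.ofReal |ξ₁ - η₁|⁻¹ * Psi w :=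
            (lintegral_const_mul' _ _ ENNReal.ofReal_ne_top).symm
        _ = ∫⁻ w, PhiM I₁ J₁ I₂ J₂ A ξ₁ η₁ v w := by
            refine lintegral_congr fun w => ?_
            have harg1 : qm ξ₁ η₁ v w + (v - qm ξ₁ η₁ v w) = v := by ring
            have harg2 : ξ₁ * qm ξ₁ η₁ v w + η₁ * (v - qm ξ₁ η₁ v w) = w := by
              have : (ξ₁ - η₁) * qm ξ₁ η₁ v w = w - η₁ * v := by
                unfold qm; field_simp
              nlinarith [this]
            rw [hPsidef]
            show ENNReal.ofReal |ξ₁ - η₁|⁻¹ *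
              Phi I₁ J₁ I₂ J₂ A ξ₁ (qm ξ₁ η₁ v w) η₁ (v - qm ξ₁ η₁ v w) = _
            unfold Phi PhiM
            rw [harg1, harg2]
            ring
    · have hz1 : ∀ ξ₂, Phi I₁ J₁ I₂ J₂ A ξ₁ ξ₂ η₁ (v - ξ₂) = 0 := by
        intro ξ₂
        unfold Phi
        rcases not_and_or.mp h with h' | h' <;>
          simp [Set.indicator_of_notMem h']
      have hz2 : ∀ w, PhiM I₁ J₁ I₂ J₂ A ξ₁ η₁ v w = 0 := by
        intro w
        unfold PhiM
        rcases not_and_or.mp h with h' | h' <;>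
          simp [Set.indicator_of_notMem h']
      rw [lintegral_congr hz1, lintegral_congr hz2, lintegral_zero]
  have eqB : ∀ ξ₁ η₁, ∫⁻ ξ₂, ∫⁻ η₂, Phi I₁ J₁ I₂ J₂ A ξ₁ ξ₂ η₁ η₂
      = ∫⁻ v, ∫⁻ w, PhiM I₁ J₁ I₂ J₂ A ξ₁ η₁ v w := by
    intro ξ₁ η₁
    calc ∫⁻ ξ₂, ∫⁻ η₂, Phi I₁ J₁ I₂ J₂ A ξ₁ ξ₂ η₁ η₂
        = ∫⁻ ξ₂, ∫⁻ v, Phi I₁ J₁ I₂ J₂ A ξ₁ ξ₂ η₁ (v - ξ₂) := by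
          refine lintegral_congr fun ξ₂ => ?_
          rw [← lintegral_add_right_eq_self
            (fun v => Phi I₁ J₁ I₂ J₂ A ξ₁ ξ₂ η₁ (v - ξ₂)) ξ₂]
          exact lintegral_congr fun η₂ => by rw [add_sub_cancel_right]
      _ = ∫⁻ v, ∫⁻ ξ₂, Phi I₁ J₁ I₂ J₂ A ξ₁ ξ₂ η₁ (v - ξ₂) :=
          lintegral_lintegral_swap (measurable_Phi_comp hI₁ hJ₁ hI₂ hJ₂ hA
            measurable_const measurable_fst measurable_const
            (measurable_snd.sub measurable_fst)).aemeasurable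
      _ = ∫⁻ v, ∫⁻ w, PhiM I₁ J₁ I₂ J₂ A ξ₁ η₁ v w :=
          lintegral_congr fun v => eqB3 ξ₁ η₁ v
  refine lintegral_congr fun ξ₁ => ?_
  rw [lintegral_congr (eqB ξ₁)]
  rw [← lintegral_add_right_eq_self
    (fun u => ∫⁻ v, ∫⁻ w, PhiM I₁ J₁ I₂ J₂ A ξ₁ (u - ξ₁) v w) ξ₁]
  exact lintegral_congr fun η₁ => by rw [add_sub_cancel_right]

lemma step3 (hI₁ : MeasurableSet I₁) (hJ₁ : MeasurableSet J₁) (hI₂ : MeasurableSet I₂)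
    (hJ₂ : MeasurableSet J₂) (hA : MeasurableSet A) :
    ∫⁻ t, ∫⁻ u, ∫⁻ v, ∫⁻ w, PhiM I₁ J₁ I₂ J₂ A t (u - t) v w
      = ∫⁻ u, ∫⁻ v, ∫⁻ w,
          (∫⁻ t, Hd I₁ J₁ I₂ J₂ t u v w) * A.indicator 1 (mk3 u v w) := by
  have hPhiM_Hd : ∀ t u v w, PhiM I₁ J₁ I₂ J₂ A t (u - t) v w
      = Hd I₁ J₁ I₂ J₂ t u v w * A.indicator 1 (mk3 u v w) := by
    intro t u v w
    unfold PhiM Hd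
    rw [show t + (u - t) = u from by ring]
  have mw : Measurable fun q : ((ℝ × ℝ) × ℝ) × ℝ =>
      PhiM I₁ J₁ I₂ J₂ A q.1.1.1 (q.1.1.2 - q.1.1.1) q.1.2 q.2 :=
    measurable_PhiM_comp hI₁ hJ₁ hI₂ hJ₂ hA (by fun_prop) (by fun_prop)
      (by fun_prop) (by fun_prop)
  have mv : Measurable fun q : (ℝ × ℝ) × ℝ =>
      ∫⁻ w, PhiM I₁ J₁ I₂ J₂ A q.1.1 (q.1.2 - q.1.1) q.2 w :=
    mw.lintegral_prod_right'
  have m1 : Measurable fun p : ℝ × ℝ =>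
      ∫⁻ v, ∫⁻ w, PhiM I₁ J₁ I₂ J₂ A p.1 (p.2 - p.1) v w :=
    mv.lintegral_prod_right'
  rw [lintegral_lintegral_swap m1.aemeasurable]
  refine lintegral_congr fun u => ?_
  have mw2 : Measurable fun q : (ℝ × ℝ) × ℝ =>
      PhiM I₁ J₁ I₂ J₂ A q.1.1 (u - q.1.1) q.1.2 q.2 :=
    measurable_PhiM_comp hI₁ hJ₁ hI₂ hJ₂ hA (by fun_prop) (by fun_prop)
      (by fun_prop) (by fun_prop)
  have m2 : Measurable fun p : ℝ × ℝ =>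
      ∫⁻ w, PhiM I₁ J₁ I₂ J₂ A p.1 (u - p.1) p.2 w :=
    mw2.lintegral_prod_right'
  rw [lintegral_lintegral_swap m2.aemeasurable]
  refine lintegral_congr fun v => ?_
  have m3 : Measurable fun p : ℝ × ℝ =>
      PhiM I₁ J₁ I₂ J₂ A p.1 (u - p.1) v p.2 :=
    measurable_PhiM_comp hI₁ hJ₁ hI₂ hJ₂ hA (by fun_prop) (by fun_prop)
      (by fun_prop) (by fun_prop)
  rw [lintegral_lintegral_swap m3.aemeasurable]
  refine lintegral_congr fun w => ?_
  have hip : A.indicator (1 : E3 → ℝ≥0∞) (mk3 u v w) ≠ ∞ := by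
    by_cases h : mk3 u v w ∈ A <;> simp [Set.indicator_apply, h]
  rw [lintegral_congr fun t => hPhiM_Hd t u v w]
  exact lintegral_mul_const' _ _ hip

/-- the density of the convolution measure -/
def gd (I₁ J₁ I₂ J₂ : Set ℝ) (x : E3) : ℝ≥0∞ :=
  ∫⁻ t, Hd I₁ J₁ I₂ J₂ t (x 0) (x 1) (x 2)

lemma measurable_gd (hI₁ : MeasurableSet I₁) (hJ₁ : MeasurableSet J₁)
    (hI₂ : MeasurableSet I₂) (hJ₂ : MeasurableSet J₂) :
    Measurable (gd I₁ J₁ I₂ J₂) := by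
  unfold gd
  exact (measurable_Hd_comp hI₁ hJ₁ hI₂ hJ₂
    (measurable_snd : Measurable fun p : E3 × ℝ => p.2)
    (((measurable_pi_apply 0).comp (WithLp.measurable_ofLp 2 _)).comp measurable_fst)
    (((measurable_pi_apply 1).comp (WithLp.measurable_ofLp 2 _)).comp measurable_fst)
    (((measurable_pi_apply 2).comp (WithLp.measurable_ofLp 2 _)).comp measurable_fst)).lintegral_prod_right'

lemma conv_density (hI₁ : MeasurableSet I₁) (hJ₁ : MeasurableSet J₁)
    (hI₂ : MeasurableSet I₂) (hJ₂ : MeasurableSet J₂)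
    (hsub₁ : I₁ ×ˢ J₁ ⊆ D1) (hsub₂ : I₂ ×ˢ J₂ ⊆ D1)
    (hsep : ∀ t ∈ I₁, ∀ s ∈ I₂, t ≠ s) :
    mconv (surfMeasAbove (I₁ ×ˢ J₁)) (surfMeasAbove (I₂ ×ˢ J₂))
      = volume.withDensity (gd I₁ J₁ I₂ J₂) := by
  refine Measure.ext fun A hA => ?_
  rw [step1 hI₁ hJ₁ hI₂ hJ₂ hsub₁ hsub₂ hA, step2 hI₁ hJ₁ hI₂ hJ₂ hA hsep,
    step3 hI₁ hJ₁ hI₂ hJ₂ hA, withDensity_apply _ hA]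
  have hgm : Measurable (gd I₁ J₁ I₂ J₂) := measurable_gd hI₁ hJ₁ hI₂ hJ₂
  have : ∫⁻ x in A, gd I₁ J₁ I₂ J₂ x
      = ∫⁻ x, gd I₁ J₁ I₂ J₂ x * A.indicator 1 x := by
    rw [← lintegral_indicator hA]
    exact lintegral_congr fun x => by
      by_cases h : x ∈ A <;> simp [Set.indicator_apply, h]
  rw [this, lintegral_mk3 (fun x => gd I₁ J₁ I₂ J₂ x * A.indicator 1 x) (hgm.mul ((measurable_one.indicator hA)))]
  rfl

end Steps

/-- **Convolution bound for separated surface-measure caps**: if `ω₁, ω₂ ⊆ D(1)` are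
squares of side at most `3R^{-1/2}` that are `≥ c₀K⁻¹`-separated in both coordinates,
and `σ₁, σ₂` are the restrictions of `dσ` to the pieces of `S` above `ω₁, ω₂`, then
`σ₁ ∗ σ₂` is absolutely continuous with density bounded a.e. by `C R^{-1/2}`, where
`C = C(K, c₀)` is independent of `R`. -/
theorem convolution_separated_caps :
    ∀ (K : ℕ) (c₀ : ℝ), 1 ≤ K → 0 < c₀ →
      ∃ C : ℝ, 0 < C ∧
        ∀ R : ℝ, 1 ≤ R →
        ∀ a₁ b₁ a₂ b₂ s₁ s₂ : ℝ,
          0 ≤ s₁ → s₁ ≤ 3 * R ^ (-(1 : ℝ) / 2) → 0 ≤ s₂ → s₂ ≤ 3 * R ^ (-(1 : ℝ) / 2) →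
          (Set.Icc a₁ (a₁ + s₁) ×ˢ Set.Icc b₁ (b₁ + s₁)) ⊆ D1 →
          (Set.Icc a₂ (a₂ + s₂) ×ˢ Set.Icc b₂ (b₂ + s₂)) ⊆ D1 →
          (∀ p ∈ Set.Icc a₁ (a₁ + s₁) ×ˢ Set.Icc b₁ (b₁ + s₁),
           ∀ q ∈ Set.Icc a₂ (a₂ + s₂) ×ˢ Set.Icc b₂ (b₂ + s₂),
            c₀ / K ≤ |p.1 - q.1| ∧ c₀ / K ≤ |p.2 - q.2|) →
          ∃ g : E3 → ℝ≥0∞, Measurable g ∧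
            mconv (surfMeasAbove (Set.Icc a₁ (a₁ + s₁) ×ˢ Set.Icc b₁ (b₁ + s₁)))
                (surfMeasAbove (Set.Icc a₂ (a₂ + s₂) ×ˢ Set.Icc b₂ (b₂ + s₂)))
              = volume.withDensity g ∧
            ∀ᵐ x : E3, g x ≤ ENNReal.ofReal (C * R ^ (-(1 : ℝ) / 2)) := by
  intro K c₀ hK hc₀
  have hKpos : (0 : ℝ) < K := by
    exact_mod_cast Nat.lt_of_lt_of_le Nat.zero_lt_one hK
  have hcK : (0 : ℝ) < c₀ / K := div_pos hc₀ hKpos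
  refine ⟨12 * K / c₀, by positivity, ?_⟩
  intro R hR a₁ b₁ a₂ b₂ s₁ s₂ hs₁0 hs₁ hs₂0 hs₂ hsub₁ hsub₂ hsepfull
  set I₁ := Set.Icc a₁ (a₁ + s₁)
  set J₁ := Set.Icc b₁ (b₁ + s₁)
  set I₂ := Set.Icc a₂ (a₂ + s₂)
  set J₂ := Set.Icc b₂ (b₂ + s₂)
  have hb₁ : b₁ ∈ J₁ := Set.mem_Icc.mpr ⟨le_refl _, by linarith⟩
  have hb₂ : b₂ ∈ J₂ := Set.mem_Icc.mpr ⟨le_refl _, by linarith⟩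
  have hsep1 : ∀ p ∈ I₁ ×ˢ J₁, ∀ q ∈ I₂ ×ˢ J₂, c₀ / K ≤ |p.1 - q.1| :=
    fun p hp q hq => (hsepfull p hp q hq).1
  have hsep : ∀ t ∈ I₁, ∀ s ∈ I₂, t ≠ s := by
    intro t ht s hs
    have := hsep1 (t, b₁) (Set.mem_prod.mpr ⟨ht, hb₁⟩) (s, b₂) (Set.mem_prod.mpr ⟨hs, hb₂⟩)
    intro hts
    rw [hts] at this
    simp only [sub_self, abs_zero] at this
    linarith
  refine ⟨gd I₁ J₁ I₂ J₂,
    measurable_gd measurableSet_Icc measurableSet_Icc measurableSet_Icc measurableSet_Icc,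
    conv_density measurableSet_Icc measurableSet_Icc measurableSet_Icc measurableSet_Icc
      hsub₁ hsub₂ hsep, ?_⟩
  -- the uniform bound on the density
  refine Filter.Eventually.of_forall fun x => ?_
  -- pointwise bound on the fiber integrand
  have hsurf_bound : ∀ ξ ∈ D1, surfJ ξ ≤ 2 := by
    intro ξ hξ
    have h1 : |ξ.1| ≤ 1 := by
      have := norm_fst_le ξ
      have h2 : ‖ξ‖ ≤ 1 := by
        simpa [D1, Metric.mem_closedBall, dist_zero_right] using hξ
      calc |ξ.1| = ‖ξ.1‖ := rfl
        _ ≤ ‖ξ‖ := norm_fst_le ξ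
        _ ≤ 1 := h2
    have h2 : |ξ.2| ≤ 1 := by
      have h2 : ‖ξ‖ ≤ 1 := by
        simpa [D1, Metric.mem_closedBall, dist_zero_right] using hξ
      calc |ξ.2| = ‖ξ.2‖ := rfl
        _ ≤ ‖ξ‖ := norm_snd_le ξ
        _ ≤ 1 := h2
    have hsq1 : ξ.1 ^ 2 ≤ 1 := by
      have := sq_abs ξ.1
      nlinarith [abs_nonneg ξ.1]
    have hsq2 : ξ.2 ^ 2 ≤ 1 := by
      have := sq_abs ξ.2
      nlinarith [abs_nonneg ξ.2]
    unfold surfJ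
    rw [show (2 : ℝ) = Real.sqrt (2 ^ 2) from (Real.sqrt_sq (by norm_num)).symm]
    apply Real.sqrt_le_sqrt
    nlinarith
  have hHbound : ∀ t u v w, Hd I₁ J₁ I₂ J₂ t u v w
      ≤ I₁.indicator (fun _ => ENNReal.ofReal (2 * 2 * (K / c₀))) t := by
    intro t u v w
    by_cases h1 : t ∈ I₁
    on_goal 2 =>
      rw [show Hd I₁ J₁ I₂ J₂ t u v w = 0 from by
        unfold Hd; rw [Set.indicator_of_notMem h1]; ring]
      exact zero_le
    by_cases h2 : qm t (u - t) v w ∈ J₁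
    on_goal 2 =>
      rw [show Hd I₁ J₁ I₂ J₂ t u v w = 0 from by
        unfold Hd; rw [Set.indicator_of_notMem h2]; ring]
      exact zero_le
    by_cases h3 : u - t ∈ I₂
    on_goal 2 =>
      rw [show Hd I₁ J₁ I₂ J₂ t u v w = 0 from by
        unfold Hd; rw [Set.indicator_of_notMem h3]; ring]
      exact zero_le
    by_cases h4 : v - qm t (u - t) v w ∈ J₂
    on_goal 2 =>
      rw [show Hd I₁ J₁ I₂ J₂ t u v w = 0 from by
        unfold Hd; rw [Set.indicator_of_notMem h4]; ring]
      exact zero_le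
    have hmem1 : (t, qm t (u - t) v w) ∈ I₁ ×ˢ J₁ := Set.mem_prod.mpr ⟨h1, h2⟩
    have hmem2 : (u - t, v - qm t (u - t) v w) ∈ I₂ ×ˢ J₂ := Set.mem_prod.mpr ⟨h3, h4⟩
    have hsJ1 : surfJ (t, qm t (u - t) v w) ≤ 2 := hsurf_bound _ (hsub₁ hmem1)
    have hsJ2 : surfJ (u - t, v - qm t (u - t) v w) ≤ 2 := hsurf_bound _ (hsub₂ hmem2)
    have hsepd : c₀ / K ≤ |t - (u - t)| := hsep1 _ hmem1 _ hmem2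
    have hinv : |t - (u - t)|⁻¹ ≤ K / c₀ := by
      rw [show (K : ℝ) / c₀ = (c₀ / K)⁻¹ from (inv_div c₀ K).symm]
      exact inv_anti₀ hcK hsepd
    unfold Hd
    rw [Set.indicator_of_mem h1, Set.indicator_of_mem h2, Set.indicator_of_mem h3,
      Set.indicator_of_mem h4, Set.indicator_of_mem h1]
    simp only [Pi.one_apply, one_mul]
    calc ENNReal.ofReal (surfJ (t, qm t (u - t) v w)) *
          ENNReal.ofReal (surfJ (u - t, v - qm t (u - t) v w)) *
          ENNReal.ofReal |t - (u - t)|⁻¹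
        = ENNReal.ofReal (surfJ (t, qm t (u - t) v w) *
            surfJ (u - t, v - qm t (u - t) v w) * |t - (u - t)|⁻¹) := by
          rw [ENNReal.ofReal_mul (mul_nonneg (surfJ_nonneg _) (surfJ_nonneg _)),
            ENNReal.ofReal_mul (surfJ_nonneg _)]
      _ ≤ ENNReal.ofReal (2 * 2 * (K / c₀)) := by
          apply ENNReal.ofReal_le_ofReal
          have h0a : 0 ≤ surfJ (t, qm t (u - t) v w) := surfJ_nonneg _
          have h0b : 0 ≤ surfJ (u - t, v - qm t (u - t) v w) := surfJ_nonneg _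
          have h0c : 0 ≤ |t - (u - t)|⁻¹ := by positivity
          have hab : surfJ (t, qm t (u - t) v w) *
              surfJ (u - t, v - qm t (u - t) v w) ≤ 2 * 2 :=
            mul_le_mul hsJ1 hsJ2 h0b (by norm_num)
          have h := mul_le_mul hab hinv h0c (by norm_num : (0 : ℝ) ≤ 2 * 2)
          linarith
  -- integrate the bound
  have hvol : (volume I₁ : ℝ≥0∞) = ENNReal.ofReal s₁ := by
    rw [show I₁ = Set.Icc a₁ (a₁ + s₁) from rfl, Real.volume_Icc, add_sub_cancel_left]
  calc gd I₁ J₁ I₂ J₂ x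
      ≤ ∫⁻ t, I₁.indicator (fun _ => ENNReal.ofReal (2 * 2 * (K / c₀))) t :=
        lintegral_mono fun t => hHbound t (x 0) (x 1) (x 2)
    _ = ENNReal.ofReal (2 * 2 * (K / c₀)) * volume I₁ :=
        lintegral_indicator_const measurableSet_Icc _
    _ = ENNReal.ofReal (2 * 2 * (K / c₀) * s₁) := by
        rw [hvol, ← ENNReal.ofReal_mul (by positivity)]
    _ ≤ ENNReal.ofReal (12 * K / c₀ * R ^ (-(1 : ℝ) / 2)) := by
        apply ENNReal.ofReal_le_ofReal
        have h4 : (0 : ℝ) ≤ 2 * 2 * (K / c₀) := by positivity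
        calc 2 * 2 * (K / c₀) * s₁ ≤ 2 * 2 * (K / c₀) * (3 * R ^ (-(1 : ℝ) / 2)) :=
              mul_le_mul_of_nonneg_left hs₁ h4
          _ = 12 * K / c₀ * R ^ (-(1 : ℝ) / 2) := by ring
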